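/- Suppose AW = αW, the Hopf identity A∘φ∘A = (α/2)(A∘φ + φ∘A) + c·φ holds, and α² + 4c ≠ 0. Then α/2 is not an eigenvalue of A on W^⊥: there is no nonzero X ∈ W^⊥ with AX = (α/2)X. -/

import Mathlib

open scoped InnerProductSpace

/-- on a Hopf hypersurface with α² + 4c ≠ 0, the value α/2 is not an
eigenvalue of A on W^⊥. -/
theorem hopf_half_alpha_not_eigenvalue
    {n : ℕ} (hn : 2 ≤ n)
    {E : Type*} [NormedAddCommGroup E] [InnerProductSpace ℝ E] [FiniteDimensional ℝ E]
    (hdim : Module.finrank ℝ E = 2 * n - 1)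
    (W : E) (hW : ‖W‖ = 1)
    (φ : E →ₗ[ℝ] E) (hφskew : ∀ x y : E, ⟪φ x, y⟫_ℝ = - ⟪x, φ y⟫_ℝ)
    (hφW : φ W = 0) (hφφ : ∀ X : E, φ (φ X) = -X + ⟪X, W⟫_ℝ • W)
    (c : ℝ) (hc : c ≠ 0)
    (A : E →ₗ[ℝ] E) (hA : ∀ x y : E, ⟪A x, y⟫_ℝ = ⟪x, A y⟫_ℝ)
    (α : ℝ) (hAW : A W = α • W)
    (hHopf : A ∘ₗ φ ∘ₗ A = (α / 2) • (A ∘ₗ φ + φ ∘ₗ A) + c • φ)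
    (hαc : α ^ 2 + 4 * c ≠ 0) :
    ¬ ∃ X : E, X ≠ 0 ∧ ⟪X, W⟫_ℝ = 0 ∧ A X = (α / 2) • X := by
  rintro ⟨X, hX0, hXW, hAX⟩
  have h := congrArg (fun T : E →ₗ[ℝ] E => T X) hHopf
  simp only [LinearMap.comp_apply, LinearMap.add_apply, LinearMap.smul_apply,
    hAX, map_smul] at h
  -- h : (α/2) • A (φ X) = (α/2) • (A (φ X) + (α/2) • φ X) + c • φ X
  have hφX : (α ^ 2 / 4 + c) • φ X = 0 := by
    have : ((α / 2) * (α / 2)) • φ X + c • φ X = 0 := by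
      have := h
      rw [smul_add, smul_smul, add_assoc] at this
      exact (left_eq_add.mp this)
    rw [← add_smul] at this
    convert this using 2
    ring
  have hφX0 : φ X = 0 := by
    have hne : α ^ 2 / 4 + c ≠ 0 := by
      intro h'
      apply hαc
      linarith
    exact (smul_eq_zero.mp hφX).resolve_left hne
  have := hφφ X
  rw [hφX0, map_zero, hXW] at this
  apply hX0
  have : -X + (0:ℝ) • W = 0 := this.symm
  simpa using this
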